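/- Let (X, I) be a matroid and R a positive integer. A finite set J ⊆ X can be partitioned into R independent sets if and only if for every subset E ⊆ J one has |E| ≤ R · rank(E). -/

import Mathlib

open Finset

open Classical in
/-- The rank of a set `E` in a matroid given by its independence predicate:
the maximal cardinality of an independent subset of `E`. -/
noncomputable def matroidRank {X : Type*} [DecidableEq X]
    (Indep : Finset X → Prop) (E : Finset X) : ℕ :=
  (E.powerset.filter fun F => Indep F).sup Finset.card


namespace RadoHorn

structure MatroidAxioms {X : Type*} [DecidableEq X] (Indep : Finset X → Prop) : Prop where
  empty : Indep ∅
  subset : ∀ ⦃I₁ I₂ : Finset X⦄, Indep I₁ → I₂ ⊆ I₁ → Indep I₂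
  exchange : ∀ ⦃I₁ I₂ : Finset X⦄, Indep I₁ → Indep I₂ → I₁.card < I₂.card →
      ∃ x ∈ I₂ \ I₁, Indep (insert x I₁)

variable {X : Type*} [DecidableEq X] {Indep : Finset X → Prop}

theorem dep_mono (M : MatroidAxioms Indep) {s t : Finset X} (hst : s ⊆ t)
    (hs : ¬ Indep s) : ¬ Indep t := fun ht => hs (M.subset ht hst)

theorem card_le_rank (M : MatroidAxioms Indep) {F S : Finset X} (hF : Indep F)
    (hFS : F ⊆ S) : F.card ≤ matroidRank Indep S := by
  classical
  exact Finset.le_sup (f := Finset.card)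
    (Finset.mem_filter.2 ⟨Finset.mem_powerset.2 hFS, hF⟩)

theorem rank_eq_of_spanning (M : MatroidAxioms Indep) {I S : Finset X} (hIS : I ⊆ S)
    (hI : Indep I) (h : ∀ w ∈ S, w ∉ I → ¬ Indep (insert w I)) :
    matroidRank Indep S = I.card := by
  classical
  refine le_antisymm (Finset.sup_le ?_) (card_le_rank M hI hIS)
  intro F hF
  rw [Finset.mem_filter, Finset.mem_powerset] at hF
  by_contra hlt
  push_neg at hlt
  obtain ⟨x, hx, hxi⟩ := M.exchange hI hF.2 hlt
  rw [Finset.mem_sdiff] at hx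
  exact h x (hF.1 hx.1) hx.2 hxi

/-- If adding `x` to `I.erase y` and to `I.erase y'` both give dependent sets, so does
adding `x` after erasing both. -/
theorem exch2 (M : MatroidAxioms Indep) {I : Finset X} (hI : Indep I) {x y y' : X}
    (hx : x ∉ I) (hy : y ∈ I) (hy' : y' ∈ I) (hne : y ≠ y')
    (d1 : ¬ Indep (insert x (I.erase y))) (d2 : ¬ Indep (insert x (I.erase y'))) :
    ¬ Indep (insert x ((I.erase y).erase y')) := by
  intro hK
  have hxK : x ∉ (I.erase y).erase y' := fun h => hx (mem_of_mem_erase (mem_of_mem_erase h))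
  have hcard2 : 1 < I.card := Finset.one_lt_card.2 ⟨y, hy, y', hy', hne⟩
  have hlt : (insert x ((I.erase y).erase y')).card < I.card := by
    rw [card_insert_of_notMem hxK, card_erase_of_mem (mem_erase_of_ne_of_mem hne.symm hy'),
      card_erase_of_mem hy]
    omega
  obtain ⟨w, hw, hwind⟩ := M.exchange hK hI hlt
  rw [Finset.mem_sdiff] at hw
  have hwx : w ≠ x := fun h => (h ▸ hw.1 : x ∈ I) |> hx
  have : w = y ∨ w = y' := by
    by_contra hc
    push_neg at hc
    exact hw.2 (mem_insert_of_mem (mem_erase_of_ne_of_mem hc.2 (mem_erase_of_ne_of_mem hc.1 hw.1)))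
  rcases this with rfl | rfl
  · apply d2
    have : insert w (insert x ((I.erase y').erase w)) = insert x (I.erase y') := by
      rw [Finset.insert_comm, insert_erase (mem_erase_of_ne_of_mem hne hw.1)]
    rw [Finset.erase_right_comm] at hwind
    rwa [this] at hwind
  · apply d1
    have : insert w (insert x ((I.erase y).erase w)) = insert x (I.erase y) := by
      rw [Finset.insert_comm, insert_erase (mem_erase_of_ne_of_mem hne.symm hw.1)]
    rwa [this] at hwind

/-- Absorption transfer: if `x*` can be added to `I`, it can still be added after a swap. -/
theorem absHelper (M : MatroidAxioms Indep) {I : Finset X} (hI : Indep I) {xs xk yk : X}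
    (hxsI : xs ∉ I) (hxsind : Indep (insert xs I)) (hxkI : xk ∉ I) (hykI : yk ∈ I)
    (hne : xs ≠ xk) (H1 : Indep (insert xk (I.erase yk))) (H2 : ¬ Indep (insert xk I)) :
    Indep (insert xs (insert xk (I.erase yk))) := by
  have hI2card : (insert xk (I.erase yk)).card = I.card := by
    rw [card_insert_of_notMem (fun h => hxkI (mem_of_mem_erase h)), card_erase_of_mem hykI]
    have : 0 < I.card := card_pos.2 ⟨yk, hykI⟩
    omega
  have hlt : (insert xk (I.erase yk)).card < (insert xs I).card := by
    rw [hI2card, card_insert_of_notMem hxsI]; omega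
  obtain ⟨w, hw, hwind⟩ := M.exchange H1 hxsind hlt
  rw [Finset.mem_sdiff, mem_insert] at hw
  rcases hw.1 with rfl | hwI
  · exact hwind
  · have hwyk : w = yk := by
      by_contra hc
      exact hw.2 (mem_insert_of_mem (mem_erase_of_ne_of_mem hc hwI))
    subst hwyk
    exfalso
    apply H2
    have : insert w (insert xk (I.erase w)) = insert xk I := by
      rw [Finset.insert_comm, insert_erase hwI]
    rwa [this] at hwind

/-- Two swaps compose: fundamental-circuit style exchange. -/
theorem swapSwap (M : MatroidAxioms Indep) {I : Finset X} (hI : Indep I) {xj xk yj yk : X}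
    (hxjI : xj ∉ I) (hxkI : xk ∉ I) (hyjI : yj ∈ I) (hykI : yk ∈ I)
    (hyne : yj ≠ yk) (hxne : xj ≠ xk)
    (H1j : Indep (insert xj (I.erase yj))) (H1k : Indep (insert xk (I.erase yk)))
    (H3jk : ¬ Indep (insert xj (I.erase yk))) :
    Indep (insert xj (insert xk ((I.erase yk).erase yj))) := by
  have hVind : Indep (insert xj ((I.erase yj).erase yk)) :=
    M.subset H1j (insert_subset_insert _ (erase_subset _ _))
  have hcard2 : 1 < I.card := Finset.one_lt_card.2 ⟨yj, hyjI, yk, hykI, hyne⟩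
  have hxjV : xj ∉ (I.erase yj).erase yk := fun h => hxjI (mem_of_mem_erase (mem_of_mem_erase h))
  have hxkI2 : xk ∉ I.erase yk := fun h => hxkI (mem_of_mem_erase h)
  have hlt : (insert xj ((I.erase yj).erase yk)).card < (insert xk (I.erase yk)).card := by
    rw [card_insert_of_notMem hxjV, card_insert_of_notMem hxkI2,
      card_erase_of_mem (mem_erase_of_ne_of_mem hyne.symm hykI), card_erase_of_mem hyjI,
      card_erase_of_mem hykI]
    omega
  obtain ⟨w, hw, hwind⟩ := M.exchange hVind H1k hlt
  rw [Finset.mem_sdiff, mem_insert] at hw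
  rcases hw.1 with rfl | hwI2
  · -- w = xk : done after rearranging
    have : insert w (insert xj ((I.erase yj).erase yk)) =
        insert xj (insert w ((I.erase yk).erase yj)) := by
      rw [Finset.insert_comm, Finset.erase_right_comm]
    rwa [this] at hwind
  · -- w ∈ I.erase yk, w ∉ V ⇒ w = yj
    have hwI : w ∈ I := mem_of_mem_erase hwI2
    have hwyk : w ≠ yk := ne_of_mem_erase hwI2
    have hwyj : w = yj := by
      by_contra hc
      exact hw.2 (mem_insert_of_mem (mem_erase_of_ne_of_mem hwyk
        (mem_erase_of_ne_of_mem hc hwI)))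
    subst hwyj
    exfalso
    apply H3jk
    have : insert w (insert xj ((I.erase w).erase yk)) = insert xj (I.erase yk) := by
      rw [Finset.insert_comm, Finset.erase_right_comm, insert_erase
        (mem_erase_of_ne_of_mem hwyk hwI)]
    rwa [this] at hwind
/-- Multi-exchange: a family of "triangular" swaps can be performed simultaneously. -/
theorem multiEx (M : MatroidAxioms Indep) (S : Finset ℕ) :
    ∀ (I : Finset X) (z : ℕ → X), Indep I →
    (∀ i ∈ S, z i ∈ I) → (∀ i ∈ S, z (i-1) ∉ I) →
    (∀ i ∈ S, ∀ j ∈ S, i ≠ j → z i ≠ z j) →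
    (∀ i ∈ S, ∀ j ∈ S, i ≠ j → z (i-1) ≠ z (j-1)) →
    (∀ i ∈ S, Indep (insert (z (i-1)) (I.erase (z i)))) →
    (∀ i ∈ S, ¬ Indep (insert (z (i-1)) I)) →
    (∀ i ∈ S, ∀ j ∈ S, i < j → ¬ Indep (insert (z (i-1)) (I.erase (z j)))) →
    Indep ((I \ S.image z) ∪ S.image (fun i => z (i-1))) := by
  induction S using Finset.strongInduction with
  | _ S IH =>
    intro I z hI hzI hzsrc hinjy hinjx hH1 hH2 hH3
    rcases S.eq_empty_or_nonempty with rfl | hS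
    · simpa using hI
    have hkS : S.max' hS ∈ S := S.max'_mem hS
    set k := S.max' hS with hk
    set S' := S.erase k with hS'
    set I1 := insert (z (k-1)) (I.erase (z k)) with hI1def
    have hI1 : Indep I1 := hH1 k hkS
    have hmemS' : ∀ j ∈ S', j ∈ S ∧ j ≠ k ∧ j < k := by
      intro j hj
      have h1 := Finset.mem_of_mem_erase hj
      have h2 := Finset.ne_of_mem_erase hj
      exact ⟨h1, h2, lt_of_le_of_ne (S.le_max' j h1) h2⟩
    have key := IH S' (Finset.erase_ssubset hkS) I1 z hI1
      (fun j hj => by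
        obtain ⟨hjS, hjk, _⟩ := hmemS' j hj
        exact mem_insert_of_mem (mem_erase_of_ne_of_mem (hinjy j hjS k hkS hjk) (hzI j hjS)))
      (fun j hj => by
        obtain ⟨hjS, hjk, _⟩ := hmemS' j hj
        rw [hI1def, mem_insert]
        push_neg
        exact ⟨hinjx j hjS k hkS hjk, fun h => hzsrc j hjS (mem_of_mem_erase h)⟩)
      (fun i hi j hj hij => hinjy i (hmemS' i hi).1 j (hmemS' j hj).1 hij)
      (fun i hi j hj hij => hinjx i (hmemS' i hi).1 j (hmemS' j hj).1 hij)
      (fun j hj => by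
        obtain ⟨hjS, hjk, hjlt⟩ := hmemS' j hj
        have hrw : I1.erase (z j) = insert (z (k-1)) ((I.erase (z k)).erase (z j)) := by
          rw [hI1def, Finset.erase_insert_of_ne]
          exact fun h => hzsrc k hkS (by rw [h]; exact hzI j hjS)
        rw [hrw]
        exact swapSwap M hI (hzsrc j hjS) (hzsrc k hkS) (hzI j hjS) (hzI k hkS)
          (hinjy j hjS k hkS hjk) (hinjx j hjS k hkS hjk)
          (hH1 j hjS) (hH1 k hkS) (hH3 j hjS k hkS hjlt))
      (fun j hj => by
        obtain ⟨hjS, hjk, hjlt⟩ := hmemS' j hj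
        apply dep_mono M _ (hH3 j hjS k hkS hjlt)
        apply insert_subset_insert
        rw [hI1def]
        exact subset_insert _ _)
      (fun i hi j hj hij => by
        obtain ⟨hiS, hik, _⟩ := hmemS' i hi
        obtain ⟨hjS, hjk, hjlt⟩ := hmemS' j hj
        apply dep_mono M
        · show insert (z (i-1)) ((I.erase (z k)).erase (z j)) ⊆ _
          apply insert_subset_insert
          rw [hI1def, Finset.erase_insert_of_ne (fun h => hzsrc k hkS (by rw [h]; exact hzI j hjS))]
          exact subset_insert _ _
        · exact exch2 M hI (hzsrc i hiS) (hzI k hkS) (hzI j hjS)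
            (hinjy k hkS j hjS (Ne.symm hjk))
            (hH3 i hiS k hkS (hij.trans hjlt))
            (hH3 i hiS j hjS hij))
    -- conclude by subset
    apply M.subset key
    apply Finset.union_subset
    · intro w hw
      rw [Finset.mem_sdiff] at hw
      apply Finset.mem_union_left
      rw [Finset.mem_sdiff]
      constructor
      · exact mem_insert_of_mem (mem_erase_of_ne_of_mem
          (fun h => hw.2 (Finset.mem_image.2 ⟨k, hkS, h.symm⟩)) hw.1)
      · exact fun h => by
          obtain ⟨j, hj, hjw⟩ := Finset.mem_image.1 h
          exact hw.2 (Finset.mem_image.2 ⟨j, (hmemS' j hj).1, hjw⟩)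
    · intro w hw
      obtain ⟨i, hi, hiw⟩ := Finset.mem_image.1 hw
      by_cases hik : i = k
      · subst hiw
        apply Finset.mem_union_left
        rw [Finset.mem_sdiff]
        constructor
        · rw [hik]
          exact mem_insert_self _ _
        · intro h
          obtain ⟨j, hj, hjw⟩ := Finset.mem_image.1 h
          exact hzsrc i hi (hjw ▸ hzI j (hmemS' j hj).1)
      · exact Finset.mem_union_right _ (Finset.mem_image.2
          ⟨i, Finset.mem_erase.2 ⟨hik, hi⟩, hiw⟩)
/-- Multi-exchange with an extra absorbed element `xs`. -/
theorem multiExAbs (M : MatroidAxioms Indep) (S : Finset ℕ) :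
    ∀ (I : Finset X) (z : ℕ → X) (xs : X), Indep I →
    xs ∉ I → Indep (insert xs I) → (∀ i ∈ S, xs ≠ z (i-1)) →
    (∀ i ∈ S, z i ∈ I) → (∀ i ∈ S, z (i-1) ∉ I) →
    (∀ i ∈ S, ∀ j ∈ S, i ≠ j → z i ≠ z j) →
    (∀ i ∈ S, ∀ j ∈ S, i ≠ j → z (i-1) ≠ z (j-1)) →
    (∀ i ∈ S, Indep (insert (z (i-1)) (I.erase (z i)))) →
    (∀ i ∈ S, ¬ Indep (insert (z (i-1)) I)) →
    (∀ i ∈ S, ∀ j ∈ S, i < j → ¬ Indep (insert (z (i-1)) (I.erase (z j)))) →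
    Indep (insert xs ((I \ S.image z) ∪ S.image (fun i => z (i-1)))) := by
  induction S using Finset.strongInduction with
  | _ S IH =>
    intro I z xs hI hxsI hxsind hxsne hzI hzsrc hinjy hinjx hH1 hH2 hH3
    rcases S.eq_empty_or_nonempty with rfl | hS
    · simpa using hxsind
    have hkS : S.max' hS ∈ S := S.max'_mem hS
    set k := S.max' hS with hk
    set S' := S.erase k with hS'
    set I1 := insert (z (k-1)) (I.erase (z k)) with hI1def
    have hI1 : Indep I1 := hH1 k hkS
    have hmemS' : ∀ j ∈ S', j ∈ S ∧ j ≠ k ∧ j < k := by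
      intro j hj
      have h1 := Finset.mem_of_mem_erase hj
      have h2 := Finset.ne_of_mem_erase hj
      exact ⟨h1, h2, lt_of_le_of_ne (S.le_max' j h1) h2⟩
    have hxsI1 : xs ∉ I1 := by
      rw [hI1def, mem_insert]
      push_neg
      exact ⟨hxsne k hkS, fun h => hxsI (mem_of_mem_erase h)⟩
    have hxsind1 : Indep (insert xs I1) := by
      rw [hI1def]
      exact absHelper M hI hxsI hxsind (hzsrc k hkS) (hzI k hkS) (hxsne k hkS)
        (hH1 k hkS) (hH2 k hkS)
    have key := IH S' (Finset.erase_ssubset hkS) I1 z xs hI1 hxsI1 hxsind1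
      (fun j hj => hxsne j (hmemS' j hj).1)
      (fun j hj => by
        obtain ⟨hjS, hjk, _⟩ := hmemS' j hj
        exact mem_insert_of_mem (mem_erase_of_ne_of_mem (hinjy j hjS k hkS hjk) (hzI j hjS)))
      (fun j hj => by
        obtain ⟨hjS, hjk, _⟩ := hmemS' j hj
        rw [hI1def, mem_insert]
        push_neg
        exact ⟨hinjx j hjS k hkS hjk, fun h => hzsrc j hjS (mem_of_mem_erase h)⟩)
      (fun i hi j hj hij => hinjy i (hmemS' i hi).1 j (hmemS' j hj).1 hij)
      (fun i hi j hj hij => hinjx i (hmemS' i hi).1 j (hmemS' j hj).1 hij)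
      (fun j hj => by
        obtain ⟨hjS, hjk, hjlt⟩ := hmemS' j hj
        have hrw : I1.erase (z j) = insert (z (k-1)) ((I.erase (z k)).erase (z j)) := by
          rw [hI1def, Finset.erase_insert_of_ne]
          exact fun h => hzsrc k hkS (by rw [h]; exact hzI j hjS)
        rw [hrw]
        exact swapSwap M hI (hzsrc j hjS) (hzsrc k hkS) (hzI j hjS) (hzI k hkS)
          (hinjy j hjS k hkS hjk) (hinjx j hjS k hkS hjk)
          (hH1 j hjS) (hH1 k hkS) (hH3 j hjS k hkS hjlt))
      (fun j hj => by
        obtain ⟨hjS, hjk, hjlt⟩ := hmemS' j hj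
        apply dep_mono M _ (hH3 j hjS k hkS hjlt)
        apply insert_subset_insert
        rw [hI1def]
        exact subset_insert _ _)
      (fun i hi j hj hij => by
        obtain ⟨hiS, hik, _⟩ := hmemS' i hi
        obtain ⟨hjS, hjk, hjlt⟩ := hmemS' j hj
        apply dep_mono M
        · show insert (z (i-1)) ((I.erase (z k)).erase (z j)) ⊆ _
          apply insert_subset_insert
          rw [hI1def, Finset.erase_insert_of_ne (fun h => hzsrc k hkS (by rw [h]; exact hzI j hjS))]
          exact subset_insert _ _
        · exact exch2 M hI (hzsrc i hiS) (hzI k hkS) (hzI j hjS)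
            (hinjy k hkS j hjS (Ne.symm hjk))
            (hH3 i hiS k hkS (hij.trans hjlt))
            (hH3 i hiS j hjS hij))
    -- conclude by subset
    apply M.subset key
    apply insert_subset_insert
    apply Finset.union_subset
    · intro w hw
      rw [Finset.mem_sdiff] at hw
      apply Finset.mem_union_left
      rw [Finset.mem_sdiff]
      constructor
      · exact mem_insert_of_mem (mem_erase_of_ne_of_mem
          (fun h => hw.2 (Finset.mem_image.2 ⟨k, hkS, h.symm⟩)) hw.1)
      · exact fun h => by
          obtain ⟨j, hj, hjw⟩ := Finset.mem_image.1 h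
          exact hw.2 (Finset.mem_image.2 ⟨j, (hmemS' j hj).1, hjw⟩)
    · intro w hw
      obtain ⟨i, hi, hiw⟩ := Finset.mem_image.1 hw
      by_cases hik : i = k
      · subst hiw
        apply Finset.mem_union_left
        rw [Finset.mem_sdiff]
        constructor
        · rw [hik]
          exact mem_insert_self _ _
        · intro h
          obtain ⟨j, hj, hjw⟩ := Finset.mem_image.1 h
          exact hzsrc i hi (hjw ▸ hzI j (hmemS' j hj).1)
      · exact Finset.mem_union_right _ (Finset.mem_image.2
          ⟨i, Finset.mem_erase.2 ⟨hik, hi⟩, hiw⟩)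
/-- Reachability in `n` steps in the exchange digraph from `x0`. -/
inductive ReachN (Indep : Finset X → Prop) {R : ℕ} (A : Fin R → Finset X) (x0 : X) :
    ℕ → X → Prop
  | zero : ReachN Indep A x0 0 x0
  | succ {n : ℕ} {z y : X} (r : Fin R) : ReachN Indep A x0 n z → z ∉ A r → y ∈ A r →
      Indep (insert z ((A r).erase y)) → ReachN Indep A x0 (n+1) y

theorem reachN_path {R : ℕ} (hR : 0 < R) {A : Fin R → Finset X} {x0 : X} {n : ℕ} {y : X}
    (h : ReachN Indep A x0 n y) :
    ∃ (z : ℕ → X) (rr : ℕ → Fin R), z 0 = x0 ∧ z n = y ∧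
      (∀ i ≤ n, ReachN Indep A x0 i (z i)) ∧
      (∀ i < n, z i ∉ A (rr (i+1)) ∧ z (i+1) ∈ A (rr (i+1)) ∧
        Indep (insert (z i) ((A (rr (i+1))).erase (z (i+1))))) := by
  induction h with
  | zero =>
    exact ⟨fun _ => x0, fun _ => ⟨0, hR⟩, rfl, rfl,
      fun i hi => by simpa [Nat.le_zero.1 hi] using ReachN.zero,
      fun i hi => absurd hi (Nat.not_lt_zero i)⟩
  | @succ n zmid y r hreach hz hy hind IH =>
    obtain ⟨z, rr, hz0, hzn, hreaches, harcs⟩ := IH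
    refine ⟨fun i => if i = n+1 then y else z i, fun i => if i = n+1 then r else rr i,
      ?_, ?_, ?_, ?_⟩
    · simpa using hz0
    · simp
    · intro i hi
      rcases Nat.lt_or_ge i (n+1) with h1 | h1
      · have : i ≠ n + 1 := Nat.ne_of_lt h1
        simpa [this] using hreaches i (Nat.lt_succ_iff.1 h1)
      · have hieq : i = n + 1 := le_antisymm hi h1
        subst hieq
        simp only [if_pos rfl]
        exact ReachN.succ r (by simpa [hzn] using hreaches n (le_refl n)) hz hy hind
    · intro i hi
      rcases Nat.lt_or_ge i n with h1 | h1
      · have h2 : i ≠ n + 1 := by omega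
        have h3 : i + 1 ≠ n + 1 := by omega
        simpa [h2, h3, show i ≠ n by omega] using harcs i h1
      · have hieq : i = n := by omega
        subst hieq
        have h2 : i ≠ i + 1 := by omega
        simp only [if_neg h2, if_pos rfl]
        exact ⟨by rwa [hzn], hy, by rwa [hzn]⟩

theorem reachN_concat {R : ℕ} {A : Fin R → Finset X} {x0 : X} {z : ℕ → X} {rr : ℕ → Fin R}
    {k : ℕ}
    (harcs : ∀ i < k, z i ∉ A (rr (i+1)) ∧ z (i+1) ∈ A (rr (i+1)) ∧
      Indep (insert (z i) ((A (rr (i+1))).erase (z (i+1))))) :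
    ∀ (d j m : ℕ), j + d = k → ReachN Indep A x0 m (z j) →
      ReachN Indep A x0 (m + d) (z k) := by
  intro d
  induction d with
  | zero => intro j m hj h; rw [← hj]; simpa using h
  | succ d IH =>
    intro j m hj h
    have hjk : j < k := by omega
    obtain ⟨h1, h2, h3⟩ := harcs j hjk
    have hstep : ReachN Indep A x0 (m+1) (z (j+1)) := ReachN.succ _ h h1 h2 h3
    have := IH (j+1) (m+1) (by omega) hstep
    rwa [show m + 1 + d = m + (d+1) by omega] at this
theorem exists_partition [Fintype X] (M : MatroidAxioms Indep) {R : ℕ} (hR : 0 < R)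
    (J : Finset X) (hcond : ∀ E ⊆ J, E.card ≤ R * matroidRank Indep E) :
    ∃ A : Fin R → Finset X, (∀ r, A r ⊆ J) ∧ (∀ x ∈ J, ∃ r, x ∈ A r) ∧
      Pairwise (fun r s => Disjoint (A r) (A s)) ∧ ∀ r, Indep (A r) := by
  classical
  obtain ⟨A₀, hA₀v, hA₀max⟩ :
      ∃ A₀ : Fin R → Finset X, (∀ r, A₀ r ⊆ J ∧ Indep (A₀ r)) ∧
        ∀ B : Fin R → Finset X, (∀ r, B r ⊆ J ∧ Indep (B r)) →
          (Finset.univ.biUnion B).card ≤ (Finset.univ.biUnion A₀).card := by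
    obtain ⟨A₀, hmem, hmax⟩ := Finset.exists_max_image
      (Finset.univ.filter (fun A : Fin R → Finset X => ∀ r, A r ⊆ J ∧ Indep (A r)))
      (fun A => (Finset.univ.biUnion A).card)
      ⟨fun _ => ∅, by simp [M.empty]⟩
    rw [Finset.mem_filter] at hmem
    exact ⟨A₀, hmem.2, fun B hB => hmax B (Finset.mem_filter.2 ⟨Finset.mem_univ _, hB⟩)⟩
  set A : Fin R → Finset X := fun r => A₀ r \ (Finset.univ.filter (· < r)).biUnion A₀
    with hAdef
  have hAsub : ∀ r, A r ⊆ A₀ r := fun r => Finset.sdiff_subset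
  have hAv : ∀ r, A r ⊆ J ∧ Indep (A r) := fun r =>
    ⟨(hAsub r).trans (hA₀v r).1, M.subset (hA₀v r).2 (hAsub r)⟩
  have hdisj' : ∀ r s : Fin R, r < s → Disjoint (A r) (A s) := by
    intro r s hrs
    rw [Finset.disjoint_left]
    intro w hwr hws
    rw [hAdef] at hws
    simp only [Finset.mem_sdiff] at hws
    exact hws.2 (Finset.mem_biUnion.2
      ⟨r, Finset.mem_filter.2 ⟨Finset.mem_univ _, hrs⟩, hAsub r hwr⟩)
  have hdisj : ∀ r s : Fin R, r ≠ s → Disjoint (A r) (A s) := by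
    intro r s hrs
    rcases lt_or_gt_of_ne hrs with h | h
    · exact hdisj' r s h
    · exact (hdisj' s r h).symm
  have hcovA : Finset.univ.biUnion A = Finset.univ.biUnion A₀ := by
    apply Finset.Subset.antisymm
    · exact Finset.biUnion_mono (fun r _ => hAsub r)
    · intro w hw
      obtain ⟨t, _, hwt⟩ := Finset.mem_biUnion.1 hw
      have hT : (Finset.univ.filter (fun u : Fin R => w ∈ A₀ u)).Nonempty :=
        ⟨t, Finset.mem_filter.2 ⟨Finset.mem_univ _, hwt⟩⟩
      set m := (Finset.univ.filter (fun u : Fin R => w ∈ A₀ u)).min' hT with hm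
      have hmmem := (Finset.univ.filter (fun u : Fin R => w ∈ A₀ u)).min'_mem hT
      rw [Finset.mem_filter] at hmmem
      refine Finset.mem_biUnion.2 ⟨m, Finset.mem_univ _, ?_⟩
      rw [hAdef]
      simp only [Finset.mem_sdiff]
      refine ⟨hmmem.2, fun h => ?_⟩
      obtain ⟨u, hu, hwu⟩ := Finset.mem_biUnion.1 h
      rw [Finset.mem_filter] at hu
      have : m ≤ u := Finset.min'_le _ u (Finset.mem_filter.2 ⟨Finset.mem_univ _, hwu⟩)
      exact absurd hu.2 (not_lt.2 this)
  suffices hcovJ : Finset.univ.biUnion A = J by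
    refine ⟨A, fun r => (hAv r).1, ?_, fun r s hrs => hdisj r s hrs, fun r => (hAv r).2⟩
    intro x hx
    obtain ⟨r, _, hxr⟩ := Finset.mem_biUnion.1 (hcovJ ▸ hx)
    exact ⟨r, hxr⟩
  apply Finset.Subset.antisymm
  · exact Finset.biUnion_subset.2 (fun r _ => (hAv r).1)
  intro x0 hx0J
  by_contra hx0cov
  have hreachJ : ∀ n w, ReachN Indep A x0 n w → w ∈ J := by
    intro n w h
    induction h with
    | zero => exact hx0J
    | succ r hprev hz hy hind IH => exact (hAv r).1 hy
  by_cases habs : ∃ n y, ReachN Indep A x0 n y ∧ ∃ s, y ∉ A s ∧ Indep (insert y (A s))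
  · -- AUGMENTATION BRANCH
    obtain ⟨k0, y0, hy0reach, s0, hy0s, hy0abs⟩ := habs
    have hQex : ∃ n, ∃ y, ReachN Indep A x0 n y ∧ ∃ s, y ∉ A s ∧ Indep (insert y (A s)) :=
      ⟨k0, y0, hy0reach, s0, hy0s, hy0abs⟩
    set k := Nat.find hQex with hkdef
    obtain ⟨y, hyreach, s, hyAs, hyabs⟩ := Nat.find_spec hQex
    have hmin : ∀ m < k, ¬ ∃ y, ReachN Indep A x0 m y ∧ ∃ s, y ∉ A s ∧ Indep (insert y (A s)) :=
      fun m hm => Nat.find_min hQex hm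
    obtain ⟨z, rr, hz0, hzk, hzreach, harcs⟩ := reachN_path hR hyreach
    have hzJ : ∀ i, i ≤ k → z i ∈ J := fun i hi => hreachJ i (z i) (hzreach i hi)
    have hshort : ∀ m, ReachN Indep A x0 m (z k) → k ≤ m := by
      intro m hm
      by_contra h
      push_neg at h
      exact hmin m h ⟨z k, hm, s, by rw [hzk]; exact hyAs, by rw [hzk]; exact hyabs⟩
    have hinj : ∀ i j, i < j → j ≤ k → z i ≠ z j := by
      intro i j hij hjk heq
      have h1 : ReachN Indep A x0 i (z j) := heq ▸ hzreach i (by omega)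
      have h2 : ReachN Indep A x0 (i + (k - j)) (z k) :=
        reachN_concat harcs (k - j) j i (by omega) h1
      have := hshort _ h2
      omega
    have hnoarc : ∀ i j (r : Fin R), 1 ≤ i → i < j → j ≤ k → z (i-1) ∉ A r → z j ∈ A r →
        ¬ Indep (insert (z (i-1)) ((A r).erase (z j))) := by
      intro i j r h1 h2 h3 h4 h5 hind
      have hstep : ReachN Indep A x0 i (z j) := by
        have := ReachN.succ r (hzreach (i-1) (by omega)) h4 h5 hind
        rwa [show i - 1 + 1 = i by omega] at this
      have h6 : ReachN Indep A x0 (i + (k - j)) (z k) :=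
        reachN_concat harcs (k - j) j i (by omega) hstep
      have := hshort _ h6
      omega
    have hnoabs : ∀ i, i < k → ∀ r : Fin R, z i ∉ A r → ¬ Indep (insert (z i) (A r)) := by
      intro i hi r h hind
      exact hmin i hi ⟨z i, hzreach i (le_of_lt hi), r, h, hind⟩
    have harc' : ∀ i, 1 ≤ i → i ≤ k → z (i-1) ∉ A (rr i) ∧ z i ∈ A (rr i) ∧
        Indep (insert (z (i-1)) ((A (rr i)).erase (z i))) := by
      intro i h1 h2
      have := harcs (i-1) (by omega)
      rwa [show i - 1 + 1 = i by omega] at this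
    set Sf : Fin R → Finset ℕ :=
      fun r => (Finset.range (k+1)).filter (fun i => i ≠ 0 ∧ rr i = r) with hSfdef
    have hSfmem : ∀ r i, i ∈ Sf r ↔ (i ≤ k ∧ i ≠ 0 ∧ rr i = r) := by
      intro r i
      rw [hSfdef]
      simp [Nat.lt_succ_iff, and_assoc]
    have c1 : ∀ r, ∀ i ∈ Sf r, z i ∈ A r := by
      intro r i hi
      obtain ⟨h1, h2, h3⟩ := (hSfmem r i).1 hi
      rw [← h3]
      exact (harc' i (by omega) h1).2.1
    have c2 : ∀ r, ∀ i ∈ Sf r, z (i-1) ∉ A r := by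
      intro r i hi
      obtain ⟨h1, h2, h3⟩ := (hSfmem r i).1 hi
      rw [← h3]
      exact (harc' i (by omega) h1).1
    have c3 : ∀ r, ∀ i ∈ Sf r, ∀ j ∈ Sf r, i ≠ j → z i ≠ z j := by
      intro r i hi j hj hij
      obtain ⟨hi1, hi2, _⟩ := (hSfmem r i).1 hi
      obtain ⟨hj1, hj2, _⟩ := (hSfmem r j).1 hj
      rcases Nat.lt_or_ge i j with h | h
      · exact hinj i j h hj1
      · exact (hinj j i (by omega) hi1).symm
    have c4 : ∀ r, ∀ i ∈ Sf r, ∀ j ∈ Sf r, i ≠ j → z (i-1) ≠ z (j-1) := by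
      intro r i hi j hj hij
      obtain ⟨hi1, hi2, _⟩ := (hSfmem r i).1 hi
      obtain ⟨hj1, hj2, _⟩ := (hSfmem r j).1 hj
      rcases Nat.lt_or_ge (i-1) (j-1) with h | h
      · exact hinj (i-1) (j-1) h (by omega)
      · exact (hinj (j-1) (i-1) (by omega) (by omega)).symm
    have c5 : ∀ r, ∀ i ∈ Sf r, Indep (insert (z (i-1)) ((A r).erase (z i))) := by
      intro r i hi
      obtain ⟨h1, h2, h3⟩ := (hSfmem r i).1 hi
      rw [← h3]
      exact (harc' i (by omega) h1).2.2
    have c6 : ∀ r, ∀ i ∈ Sf r, ¬ Indep (insert (z (i-1)) (A r)) := by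
      intro r i hi
      obtain ⟨h1, h2, h3⟩ := (hSfmem r i).1 hi
      exact hnoabs (i-1) (by omega) r (c2 r i hi)
    have c7 : ∀ r, ∀ i ∈ Sf r, ∀ j ∈ Sf r, i < j →
        ¬ Indep (insert (z (i-1)) ((A r).erase (z j))) := by
      intro r i hi j hj hij
      obtain ⟨hi1, hi2, _⟩ := (hSfmem r i).1 hi
      obtain ⟨hj1, hj2, _⟩ := (hSfmem r j).1 hj
      exact hnoarc i j r (by omega) hij hj1 (c2 r i hi) (c1 r j hj)
    have hzkA : z k ∉ A s := by rw [hzk]; exact hyAs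
    have hzkind : Indep (insert (z k) (A s)) := by rw [hzk]; exact hyabs
    have hzkne : ∀ i ∈ Sf s, z k ≠ z (i-1) := by
      intro i hi
      obtain ⟨h1, h2, _⟩ := (hSfmem s i).1 hi
      exact (hinj (i-1) k (by omega) (le_refl _)).symm
    set Astar : Fin R → Finset X := fun r =>
      if r = s then insert (z k) ((A r \ (Sf r).image z) ∪ (Sf r).image (fun i => z (i-1)))
      else (A r \ (Sf r).image z) ∪ (Sf r).image (fun i => z (i-1)) with hAstardef
    have hAstarind : ∀ r, Indep (Astar r) := by
      intro r
      simp only [hAstardef]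
      by_cases hrs : r = s
      · subst hrs
        rw [if_pos rfl]
        exact multiExAbs M (Sf r) (A r) z (z k) (hAv r).2 hzkA hzkind hzkne
          (c1 r) (c2 r) (c3 r) (c4 r) (c5 r) (c6 r) (c7 r)
      · rw [if_neg hrs]
        exact multiEx M (Sf r) (A r) z (hAv r).2
          (c1 r) (c2 r) (c3 r) (c4 r) (c5 r) (c6 r) (c7 r)
    have hAstarv : ∀ r, Astar r ⊆ J ∧ Indep (Astar r) := by
      intro r
      refine ⟨?_, hAstarind r⟩
      have hbsub : (A r \ (Sf r).image z) ∪ (Sf r).image (fun i => z (i-1)) ⊆ J := by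
        apply Finset.union_subset
        · exact Finset.sdiff_subset.trans (hAv r).1
        · intro w hw
          obtain ⟨i, hi, hiw⟩ := Finset.mem_image.1 hw
          obtain ⟨h1, h2, _⟩ := (hSfmem r i).1 hi
          exact hiw ▸ hzJ (i-1) (by omega)
      simp only [hAstardef]
      by_cases hrs : r = s
      · rw [if_pos hrs]
        exact Finset.insert_subset (hzJ k (le_refl _)) hbsub
      · rw [if_neg hrs]
        exact hbsub
    have hclaim1 : ∀ i, i ≤ k → z i ∈ Finset.univ.biUnion Astar := by
      intro i hi
      rcases Nat.lt_or_ge i k with hik | hik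
      · have hiS : i + 1 ∈ Sf (rr (i+1)) := (hSfmem _ _).2 ⟨by omega, by omega, rfl⟩
        have hmem : z i ∈ (Sf (rr (i+1))).image (fun j => z (j-1)) :=
          Finset.mem_image.2 ⟨i+1, hiS, by simp⟩
        refine Finset.mem_biUnion.2 ⟨rr (i+1), Finset.mem_univ _, ?_⟩
        simp only [hAstardef]
        by_cases hrs : rr (i+1) = s
        · rw [if_pos hrs]
          exact Finset.mem_insert_of_mem (Finset.mem_union_right _ hmem)
        · rw [if_neg hrs]
          exact Finset.mem_union_right _ hmem
      · have hieq : i = k := le_antisymm hi hik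
        subst hieq
        refine Finset.mem_biUnion.2 ⟨s, Finset.mem_univ _, ?_⟩
        simp only [hAstardef, if_pos rfl]
        exact Finset.mem_insert_self _ _
    have hcovsub : insert x0 (Finset.univ.biUnion A) ⊆ Finset.univ.biUnion Astar := by
      intro w hw
      rcases Finset.mem_insert.1 hw with rfl | hw
      · rw [← hz0]
        exact hclaim1 0 (Nat.zero_le _)
      · obtain ⟨r, _, hwr⟩ := Finset.mem_biUnion.1 hw
        by_cases hwS : w ∈ (Sf r).image z
        · obtain ⟨i, hi, hiw⟩ := Finset.mem_image.1 hwS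
          obtain ⟨h1, _, _⟩ := (hSfmem r i).1 hi
          exact hiw ▸ hclaim1 i h1
        · have hmem : w ∈ (A r \ (Sf r).image z) ∪ (Sf r).image (fun i => z (i-1)) :=
            Finset.mem_union_left _ (Finset.mem_sdiff.2 ⟨hwr, hwS⟩)
          refine Finset.mem_biUnion.2 ⟨r, Finset.mem_univ _, ?_⟩
          simp only [hAstardef]
          by_cases hrs : r = s
          · rw [if_pos hrs]
            exact Finset.mem_insert_of_mem hmem
          · rw [if_neg hrs]
            exact hmem
    have hlt : (Finset.univ.biUnion A).card < (Finset.univ.biUnion Astar).card := by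
      calc (Finset.univ.biUnion A).card
          < (insert x0 (Finset.univ.biUnion A)).card := by
            rw [Finset.card_insert_of_notMem hx0cov]; omega
        _ ≤ _ := Finset.card_le_card hcovsub
    have hmax := hA₀max Astar hAstarv
    rw [← hcovA] at hmax
    omega
  · -- RANK BRANCH
    push_neg at habs
    set E : Finset X := J.filter (fun w => ∃ n, ReachN Indep A x0 n w) with hEdef
    have hEJ : E ⊆ J := Finset.filter_subset _ _
    have hx0E : x0 ∈ E := Finset.mem_filter.2 ⟨hx0J, 0, ReachN.zero⟩
    have hrankr : ∀ r, matroidRank Indep E = (A r ∩ E).card := by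
      intro r
      apply rank_eq_of_spanning M Finset.inter_subset_right
        (M.subset (hAv r).2 Finset.inter_subset_left)
      intro w hwE hwn hIns
      obtain ⟨n, hwreach⟩ := (Finset.mem_filter.1 hwE).2
      have hwAr : w ∉ A r := fun h => hwn (Finset.mem_inter.2 ⟨h, hwE⟩)
      have hdep : ¬Indep (insert w (A r)) := habs n w hwreach r hwAr
      obtain ⟨B, hBmem, hBmax⟩ := Finset.exists_max_image
        (((A r).powerset).filter (fun B => A r ∩ E ⊆ B ∧ Indep (insert w B)))
        Finset.card
        ⟨A r ∩ E, Finset.mem_filter.2 ⟨Finset.mem_powerset.2 Finset.inter_subset_left,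
          Finset.Subset.refl _, hIns⟩⟩
      rw [Finset.mem_filter, Finset.mem_powerset] at hBmem
      have hB1 := hBmem.1
      have hB2 := hBmem.2.1
      have hB3 := hBmem.2.2
      have hwB : w ∉ B := fun h => hwAr (hB1 h)
      have hcard : (A r).card ≤ B.card + 1 := by
        by_contra hlt
        push_neg at hlt
        have hlt2 : (insert w B).card < (A r).card := by
          rw [Finset.card_insert_of_notMem hwB]; omega
        obtain ⟨u, hu, huind⟩ := M.exchange hB3 (hAv r).2 hlt2
        rw [Finset.mem_sdiff] at hu
        have huB : u ∉ B := fun h => hu.2 (Finset.mem_insert_of_mem h)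
        have hle : (insert u B).card ≤ B.card := hBmax (insert u B) (Finset.mem_filter.2
          ⟨Finset.mem_powerset.2 (Finset.insert_subset hu.1 hB1),
           hB2.trans (Finset.subset_insert _ _),
           by rwa [Finset.insert_comm] at huind⟩)
        rw [Finset.card_insert_of_notMem huB] at hle
        omega
      have hBne : B ≠ A r := fun h => hdep (h ▸ hB3)
      obtain ⟨u, hu⟩ : (A r \ B).Nonempty := by
        rw [Finset.sdiff_nonempty]
        exact fun h => hBne (Finset.Subset.antisymm hB1 h)
      rw [Finset.mem_sdiff] at hu
      have hBeq : B = (A r).erase u := by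
        apply Finset.eq_of_subset_of_card_le
        · intro b hb
          exact Finset.mem_erase.2 ⟨fun h => hu.2 (h ▸ hb), hB1 hb⟩
        · rw [Finset.card_erase_of_mem hu.1]; omega
      have huE : u ∉ E := fun h => hu.2 (hB2 (Finset.mem_inter.2 ⟨hu.1, h⟩))
      have hureach : ReachN Indep A x0 (n+1) u :=
        ReachN.succ r hwreach hwAr hu.1 (by rw [← hBeq]; exact hB3)
      exact huE (Finset.mem_filter.2 ⟨(hAv r).1 hu.1, n+1, hureach⟩)
    have hEcond := hcond E hEJ
    have hsplit : (E ∩ Finset.univ.biUnion A).card + 1 ≤ E.card := by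
      have hx0ni : x0 ∉ E ∩ Finset.univ.biUnion A :=
        fun h => hx0cov (Finset.mem_inter.1 h).2
      calc (E ∩ Finset.univ.biUnion A).card + 1
          = (insert x0 (E ∩ Finset.univ.biUnion A)).card :=
            (Finset.card_insert_of_notMem hx0ni).symm
        _ ≤ E.card := Finset.card_le_card
            (Finset.insert_subset hx0E Finset.inter_subset_left)
    have hEcov : E ∩ Finset.univ.biUnion A = Finset.univ.biUnion (fun r => A r ∩ E) := by
      ext w
      simp only [Finset.mem_inter, Finset.mem_biUnion, Finset.mem_univ, true_and]
      tauto
    have hcardcov : (E ∩ Finset.univ.biUnion A).card = ∑ r, (A r ∩ E).card := by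
      rw [hEcov]
      apply Finset.card_biUnion
      intro r _ s _ hrs
      exact (hdisj r s hrs).mono Finset.inter_subset_left Finset.inter_subset_left
    have hsum : ∑ r : Fin R, (A r ∩ E).card = R * matroidRank Indep E := by
      rw [Finset.sum_congr rfl (fun r _ => (hrankr r).symm), Finset.sum_const,
        Finset.card_univ, Fintype.card_fin, smul_eq_mul]
    rw [hcardcov, hsum] at hsplit
    omega
end RadoHorn

open RadoHorn

/-- Rado–Horn for matroids: given a matroid `(X, Indep)` and a positive
integer `R`, a finite set `J ⊆ X` can be partitioned into `R` independent sets iff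
`|E| ≤ R · rank(E)` for every `E ⊆ J`. -/
theorem radoHorn_matroid {X : Type*} [Fintype X] [DecidableEq X]
    (Indep : Finset X → Prop)
    (h_empty : Indep ∅)
    (h_subset : ∀ I₁ I₂ : Finset X, Indep I₁ → I₂ ⊆ I₁ → Indep I₂)
    (h_exchange : ∀ I₁ I₂ : Finset X, Indep I₁ → Indep I₂ → I₁.card < I₂.card →
      ∃ x ∈ I₂ \ I₁, Indep (insert x I₁))
    (R : ℕ) (hR : 0 < R) (J : Finset X) :
    (∃ A : Fin R → Finset X,
        (∀ r, A r ⊆ J) ∧ (∀ x ∈ J, ∃ r, x ∈ A r) ∧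
        Pairwise (fun r s => Disjoint (A r) (A s)) ∧
        ∀ r, Indep (A r)) ↔
      ∀ E ⊆ J, E.card ≤ R * matroidRank Indep E := by
  have M : MatroidAxioms Indep :=
    ⟨h_empty, fun I₁ I₂ h1 h2 => h_subset I₁ I₂ h1 h2,
      fun I₁ I₂ a b c => h_exchange I₁ I₂ a b c⟩
  constructor
  · rintro ⟨A, hsub, hcover, hdisj, hindep⟩ E hEJ
    have hsub2 : E ⊆ Finset.univ.biUnion (fun r => A r ∩ E) := by
      intro w hw
      obtain ⟨r, hr⟩ := hcover w (hEJ hw)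
      exact Finset.mem_biUnion.2 ⟨r, Finset.mem_univ _, Finset.mem_inter.2 ⟨hr, hw⟩⟩
    calc E.card ≤ (Finset.univ.biUnion fun r => A r ∩ E).card := Finset.card_le_card hsub2
      _ ≤ ∑ r, (A r ∩ E).card := Finset.card_biUnion_le
      _ ≤ ∑ _r : Fin R, matroidRank Indep E := Finset.sum_le_sum (fun r _ =>
          card_le_rank M (M.subset (hindep r) Finset.inter_subset_left)
            Finset.inter_subset_right)
      _ = R * matroidRank Indep E := by
          rw [Finset.sum_const, Finset.card_univ, Fintype.card_fin, smul_eq_mul]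
  · intro hcond
    exact exists_partition M hR J hcond
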